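/- Let G be a locally compact second countable group acting measurably and measure-preservingly on a standard Borel probability space (X,μ). If the action is free, i.e. for every g ∈ G with g ≠ 1 one has gx ≠ x for μ-almost every x, then the action is measurably free: for every g ∈ G with g ≠ 1 there exists a countable family {A_n} of pairwise disjoint measurable subsets of X whose union is conull and such that gA_n ∩ A_n = ∅ for every n. -/

import Mathlib

open MeasureTheory Filter Topology
open scoped ENNReal

noncomputable section

variable (G : Type*) [Group G] [TopologicalSpace G] [IsTopologicalGroup G]
  [LocallyCompactSpace G] [SecondCountableTopology G]
  [MeasurableSpace G] [BorelSpace G]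

/-- A pointwise almost everywhere free measurable measure preserving action of a locally
compact second countable group on a standard Borel probability space is measurably free:
for every `g ≠ 1` there is a countable measurable partition of a conull set into pieces
moved off themselves by `g`. -/
theorem measurablyFree_of_free
    (X : Type*) [MeasurableSpace X] [StandardBorelSpace X]
    (μ : Measure X) [IsProbabilityMeasure μ] (a : G → X → X)
    (hone : ∀ x, a 1 x = x)
    (hmul : ∀ g h x, a (g * h) x = a g (a h x))
    (hmeas : Measurable (fun p : G × X => a p.1 p.2))
    (hpres : ∀ g : G, MeasurePreserving (a g) μ μ)
    (hfree : ∀ g : G, g ≠ 1 → ∀ᵐ x ∂μ, a g x ≠ x) :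
    ∀ g : G, g ≠ 1 → ∃ A : ℕ → Set X,
      (∀ n, MeasurableSet (A n)) ∧
      Pairwise (Function.onFun Disjoint A) ∧
      μ (⋃ n, A n)ᶜ = 0 ∧
      ∀ n, (a g '' A n) ∩ A n = ∅ := by
  intro g hg
  -- `a g` is measurable
  have hag : Measurable (a g) := hmeas.comp (measurable_const.prodMk measurable_id)
  -- a countable separating family of measurable sets
  obtain ⟨S, hSmeas, hSsep⟩ :=
    exists_seq_separating X (p := MeasurableSet) MeasurableSet.univ Set.univ
  -- sets together with complements
  set T : ℕ → Set X := fun n => if Even n then S (n / 2) else (S (n / 2))ᶜ with hT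
  have hTmeas : ∀ n, MeasurableSet (T n) := by
    intro n
    by_cases h : Even n <;> simp [hT, h, hSmeas, (hSmeas _).compl]
  -- the sets `D n`
  set D : ℕ → Set X := fun n => T n ∩ (a g) ⁻¹' (T n)ᶜ with hD
  have hDmeas : ∀ n, MeasurableSet (D n) := fun n =>
    (hTmeas n).inter ((hTmeas n).compl.preimage hag)
  -- every `x` with `a g x ≠ x` lies in some `D n`
  have hcover : {x | a g x ≠ x} ⊆ ⋃ n, D n := by
    intro x hx
    have : ¬ ∀ n, x ∈ S n ↔ a g x ∈ S n := fun h =>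
      hx (hSsep (a g x) trivial x trivial (fun n => (h n).symm))
    push_neg at this
    obtain ⟨n, hn⟩ := this
    rcases hn with ⟨h1, h2⟩ | ⟨h1, h2⟩
    · refine Set.mem_iUnion.2 ⟨2 * n, ?_, ?_⟩ <;>
        simp [hT, even_two_mul, Nat.mul_div_cancel_left n two_pos, h1, h2]
    · have hdiv : (2 * n + 1) / 2 = n := by omega
      refine Set.mem_iUnion.2 ⟨2 * n + 1, ?_, ?_⟩ <;>
        simp [hT, hdiv, Nat.even_add_one, even_two_mul, h1, h2]
  refine ⟨disjointed D, fun n => MeasurableSet.disjointed hDmeas n, disjoint_disjointed D,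
    ?_, ?_⟩
  · have h0 : μ {x | ¬ a g x ≠ x} = 0 := by
      have := hfree g hg
      rwa [ae_iff] at this
    refine measure_mono_null (fun x hx => ?_) h0
    simp only [Set.mem_compl_iff, iUnion_disjointed] at hx
    simp only [Set.mem_setOf_eq, not_not]
    by_contra h
    exact hx (hcover h)
  · intro n
    ext y
    simp only [Set.mem_inter_iff, Set.mem_image, Set.mem_empty_iff_false, iff_false, not_and]
    rintro ⟨x, hx, rfl⟩ hy
    have hx' : x ∈ D n := disjointed_subset D n hx
    have hy' : a g x ∈ D n := disjointed_subset D n hy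
    exact hx'.2 hy'.1
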